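/- Gradient flow linearization (empirical risk decay): let f_n : ℝ^p → ℝ^n be continuously differentiable with Jacobian D f_n, let θ_t solve dθ_t/dt = (1/n) D f_n(θ_t)^T (y − f_n(θ_t)), and set σ_min = σ_min(D f_n(θ_0)), L = Lip(D f_n). If L·‖y − f_n(θ_0)‖₂ < σ_min²/4, then for all t ≥ 0: (i) ‖θ_t − θ_0‖₂ ≤ (2/σ_min)‖y − f_n(θ_0)‖₂, and (ii) the empirical risk L̂(θ_t) = (1/2n)‖y − f_n(θ_t)‖² satisfies L̂(θ_t) ≤ L̂(θ_0)·exp(−σ_min² t/(2n)). -/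

import Mathlib

open scoped RealInnerProductSpace

lemma gfl_deriv_sq {p n : ℕ}
    (f : EuclideanSpace ℝ (Fin p) → EuclideanSpace ℝ (Fin n))
    (J : EuclideanSpace ℝ (Fin p) →
      (EuclideanSpace ℝ (Fin p) →L[ℝ] EuclideanSpace ℝ (Fin n)))
    (hJ : ∀ x, HasFDerivAt f (J x) x)
    (y : EuclideanSpace ℝ (Fin n))
    (θ : ℝ → EuclideanSpace ℝ (Fin p))
    (hflow : ∀ t : ℝ, HasDerivAt θ
      ((1 / (n : ℝ)) • (ContinuousLinearMap.adjoint (J (θ t)) (y - f (θ t)))) t)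
    (s : ℝ) :
    HasDerivAt (fun u => ‖y - f (θ u)‖ ^ 2)
      (-(2 / (n : ℝ)) * ‖ContinuousLinearMap.adjoint (J (θ s)) (y - f (θ s))‖ ^ 2) s := by
  have hr' : HasDerivAt (fun u => y - f (θ u))
      (-((1 / (n : ℝ)) • ((J (θ s)) (ContinuousLinearMap.adjoint (J (θ s)) (y - f (θ s)))))) s := by
    have h1 : HasDerivAt (fun u => f (θ u))
        ((J (θ s)) ((1 / (n : ℝ)) • (ContinuousLinearMap.adjoint (J (θ s)) (y - f (θ s))))) s :=
      (hJ (θ s)).comp_hasDerivAt s (hflow s)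
    have := (hasDerivAt_const s y).sub h1
    refine this.congr_deriv ?_
    simp [map_smul]
  have hg := HasDerivAt.inner ℝ hr' hr'
  simp only [real_inner_self_eq_norm_sq] at hg
  refine hg.congr_deriv ?_
  have key : ⟪y - f (θ s), (J (θ s)) (ContinuousLinearMap.adjoint (J (θ s)) (y - f (θ s)))⟫
      = ‖ContinuousLinearMap.adjoint (J (θ s)) (y - f (θ s))‖ ^ 2 := by
    rw [← ContinuousLinearMap.adjoint_inner_left, real_inner_self_eq_norm_sq]
  rw [inner_neg_right, inner_neg_left, inner_smul_right, inner_smul_left, real_inner_comm] at *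
  simp only [key]
  simp only [starRingEnd_apply, star_trivial]
  ring

lemma gfl_lower {p n : ℕ}
    (A B : EuclideanSpace ℝ (Fin p) →L[ℝ] EuclideanSpace ℝ (Fin n))
    (σmin c : ℝ)
    (hσmin : ∀ u, σmin * ‖u‖ ≤ ‖ContinuousLinearMap.adjoint A u‖)
    (hAB : ‖A - B‖ ≤ c) (u : EuclideanSpace ℝ (Fin n)) :
    (σmin - c) * ‖u‖ ≤ ‖ContinuousLinearMap.adjoint B u‖ := by
  have h1 : ‖ContinuousLinearMap.adjoint A u - ContinuousLinearMap.adjoint B u‖ ≤ c * ‖u‖ := by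
    have heq : ContinuousLinearMap.adjoint A u - ContinuousLinearMap.adjoint B u
        = (ContinuousLinearMap.adjoint (A - B)) u := by
      rw [map_sub]; rfl
    rw [heq]
    calc ‖(ContinuousLinearMap.adjoint (A - B)) u‖
        ≤ ‖ContinuousLinearMap.adjoint (A - B)‖ * ‖u‖ :=
          (ContinuousLinearMap.adjoint (A - B)).le_opNorm u
      _ = ‖A - B‖ * ‖u‖ := by rw [LinearIsometryEquiv.norm_map]
      _ ≤ c * ‖u‖ := mul_le_mul_of_nonneg_right hAB (norm_nonneg u)
  have h2 := hσmin u
  have h3 := norm_sub_norm_le (ContinuousLinearMap.adjoint A u) (ContinuousLinearMap.adjoint B u)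
  have := h3.trans h1
  nlinarith [norm_nonneg u]

set_option maxHeartbeats 1000000 in
/-- Gradient flow in the linear (lazy) regime: if `f_n : ℝ^p → ℝ^n` has Jacobian `J`
with Lipschitz constant `L`, `σ_min` is a lower bound on the smallest singular value
of `J(θ₀)`, and `L ‖y - f_n(θ₀)‖ < σ_min²/4`, then along the gradient flow
`dθ_t/dt = (1/n) J(θ_t)ᵀ (y - f_n(θ_t))` one has, for all `t ≥ 0`:
(i) `‖θ_t - θ₀‖ ≤ (2/σ_min) ‖y - f_n(θ₀)‖`, and
(ii) `L̂(θ_t) = (1/2n)‖y - f_n(θ_t)‖² ≤ L̂(θ₀) exp(-σ_min² t/(2n))`. -/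
theorem gradient_flow_linear_regime
    {p n : ℕ} (hn : 0 < n)
    (f : EuclideanSpace ℝ (Fin p) → EuclideanSpace ℝ (Fin n))
    (J : EuclideanSpace ℝ (Fin p) →
      (EuclideanSpace ℝ (Fin p) →L[ℝ] EuclideanSpace ℝ (Fin n)))
    (hJ : ∀ x, HasFDerivAt f (J x) x)
    (L : ℝ) (hL0 : 0 ≤ L)
    (hLip : ∀ a b, ‖J a - J b‖ ≤ L * ‖a - b‖)
    (y : EuclideanSpace ℝ (Fin n))
    (θ : ℝ → EuclideanSpace ℝ (Fin p))
    (hflow : ∀ t : ℝ, HasDerivAt θ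
      ((1 / (n : ℝ)) • (ContinuousLinearMap.adjoint (J (θ t)) (y - f (θ t)))) t)
    (σmin : ℝ) (hσ : 0 < σmin)
    (hσmin : ∀ u : EuclideanSpace ℝ (Fin n),
      σmin * ‖u‖ ≤ ‖ContinuousLinearMap.adjoint (J (θ 0)) u‖)
    (hcond : L * ‖y - f (θ 0)‖ < σmin ^ 2 / 4) :
    ∀ t : ℝ, 0 ≤ t →
      ‖θ t - θ 0‖ ≤ (2 / σmin) * ‖y - f (θ 0)‖ ∧
      (1 / (2 * (n : ℝ))) * ‖y - f (θ t)‖ ^ 2 ≤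
        (1 / (2 * (n : ℝ))) * ‖y - f (θ 0)‖ ^ 2 *
          Real.exp (-(σmin ^ 2 / (2 * (n : ℝ))) * t) := by
  have hn' : (0 : ℝ) < n := by exact_mod_cast hn
  have hg' := gfl_deriv_sq f J hJ y θ hflow
  have hθcont : Continuous θ := by
    rw [continuous_iff_continuousAt]; exact fun s => (hflow s).continuousAt
  have hfcont : Continuous f := by
    rw [continuous_iff_continuousAt]; exact fun x => (hJ x).continuousAt
  have hrcont : Continuous fun s => y - f (θ s) :=
    continuous_const.sub (hfcont.comp hθcont)
  have hgcont : Continuous fun s => ‖y - f (θ s)‖ ^ 2 := hrcont.norm.pow 2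
  -- ρ bound from the condition
  have hρσ : L * ((2 / σmin) * ‖y - f (θ 0)‖) ≤ σmin / 2 := by
    have h2 : (2 / σmin) * (L * ‖y - f (θ 0)‖) ≤ (2 / σmin) * (σmin ^ 2 / 4) :=
      mul_le_mul_of_nonneg_left hcond.le (by positivity)
    have h3 : (2 / σmin) * (σmin ^ 2 / 4) = σmin / 2 := by field_simp; ring
    nlinarith
  -- lower singular-value bound inside the ball
  have hlow : ∀ s : ℝ, ‖θ s - θ 0‖ ≤ (2 / σmin) * ‖y - f (θ 0)‖ →
      ∀ u, (σmin / 2) * ‖u‖ ≤ ‖ContinuousLinearMap.adjoint (J (θ s)) u‖ := by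
    intro s hs u
    have hc : ‖J (θ 0) - J (θ s)‖ ≤ σmin / 2 := by
      calc ‖J (θ 0) - J (θ s)‖ ≤ L * ‖θ 0 - θ s‖ := hLip _ _
        _ = L * ‖θ s - θ 0‖ := by rw [norm_sub_rev]
        _ ≤ L * ((2 / σmin) * ‖y - f (θ 0)‖) := mul_le_mul_of_nonneg_left hs hL0
        _ ≤ σmin / 2 := hρσ
    have h := gfl_lower (J (θ 0)) (J (θ s)) σmin (σmin / 2) hσmin hc u
    nlinarith [norm_nonneg u]
  -- g is antitone
  have hganti : Antitone fun s => ‖y - f (θ s)‖ ^ 2 := by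
    apply antitone_of_deriv_nonpos (fun s => (hg' s).differentiableAt)
    intro x
    rw [(hg' x).deriv]
    have : (0:ℝ) ≤ 2 / (n : ℝ) := by positivity
    nlinarith [sq_nonneg ‖ContinuousLinearMap.adjoint (J (θ x)) (y - f (θ x))‖]
  -- key comparison lemma on intervals where the residual does not vanish
  have hρσS : L * ((2 / σmin) * ‖y - f (θ 0)‖) < σmin / 2 := by
    have h2 : (2 / σmin) * (L * ‖y - f (θ 0)‖) < (2 / σmin) * (σmin ^ 2 / 4) :=
      mul_lt_mul_of_pos_left hcond (by positivity)
    have h3 : (2 / σmin) * (σmin ^ 2 / 4) = σmin / 2 := by field_simp; ring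
    nlinarith
  have hlowS : ∀ s : ℝ, ‖θ s - θ 0‖ ≤ (2 / σmin) * ‖y - f (θ 0)‖ →
      ∀ u, u ≠ 0 → (σmin / 2) * ‖u‖ < ‖ContinuousLinearMap.adjoint (J (θ s)) u‖ := by
    intro s hs u hu
    have hc : ‖J (θ 0) - J (θ s)‖ < σmin / 2 := by
      calc ‖J (θ 0) - J (θ s)‖ ≤ L * ‖θ 0 - θ s‖ := hLip _ _
        _ = L * ‖θ s - θ 0‖ := by rw [norm_sub_rev]
        _ ≤ L * ((2 / σmin) * ‖y - f (θ 0)‖) := mul_le_mul_of_nonneg_left hs hL0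
        _ < σmin / 2 := hρσS
    have h := gfl_lower (J (θ 0)) (J (θ s)) σmin ‖J (θ 0) - J (θ s)‖ hσmin le_rfl u
    have hupos : (0:ℝ) < ‖u‖ := norm_pos_iff.mpr hu
    nlinarith
  have key : ∀ b : ℝ, 0 ≤ b → (∀ s ∈ Set.Ico (0:ℝ) b, y - f (θ s) ≠ 0) →
      ‖θ b - θ 0‖ ≤ (2 / σmin) * ‖y - f (θ 0)‖ := by
    intro b hb hne
    have hfc : ContinuousOn (fun s => ‖θ s - θ 0‖) (Set.Icc 0 b) :=
      ((hθcont.sub continuous_const).norm).continuousOn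
    have hfd : ∀ x ∈ Set.Ico (0:ℝ) b, HasDerivWithinAt (fun s => θ s - θ 0)
        ((1 / (n : ℝ)) • ContinuousLinearMap.adjoint (J (θ x)) (y - f (θ x)))
        (Set.Ici x) x :=
      fun x _ => ((hflow x).sub_const (θ 0)).hasDerivWithinAt
    have hB0 : ‖θ 0 - θ 0‖ ≤ (2 / σmin) *
        (‖y - f (θ 0)‖ - Real.sqrt (‖y - f (θ 0)‖ ^ 2)) := by
      simp [Real.sqrt_sq (norm_nonneg (y - f (θ 0)))]
    have hBc : ContinuousOn (fun s => (2 / σmin) *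
        (‖y - f (θ 0)‖ - Real.sqrt (‖y - f (θ s)‖ ^ 2))) (Set.Icc 0 b) :=
      (continuous_const.mul (continuous_const.sub
        (Real.continuous_sqrt.comp hgcont))).continuousOn
    have hBd : ∀ x ∈ Set.Ico (0:ℝ) b, HasDerivWithinAt (fun s => (2 / σmin) *
        (‖y - f (θ 0)‖ - Real.sqrt (‖y - f (θ s)‖ ^ 2)))
        ((fun s => (2 / σmin) * (((2 / (n : ℝ)) *
          ‖ContinuousLinearMap.adjoint (J (θ s)) (y - f (θ s))‖ ^ 2) /
          (2 * Real.sqrt (‖y - f (θ s)‖ ^ 2)))) x) (Set.Ici x) x := by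
      intro x hx
      have hgx : ‖y - f (θ x)‖ ^ 2 ≠ 0 :=
        pow_ne_zero 2 (norm_ne_zero_iff.mpr (hne x hx))
      have hB := (((hg' x).sqrt hgx).const_sub ‖y - f (θ 0)‖).const_mul (2 / σmin)
      refine HasDerivAt.hasDerivWithinAt ?_
      refine hB.congr_deriv ?_
      ring
    have hbound : ∀ x ∈ Set.Ico (0:ℝ) b,
        ‖θ x - θ 0‖ = (2 / σmin) * (‖y - f (θ 0)‖ - Real.sqrt (‖y - f (θ x)‖ ^ 2)) →
        ‖(1 / (n : ℝ)) • ContinuousLinearMap.adjoint (J (θ x)) (y - f (θ x))‖ <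
        (fun s => (2 / σmin) * (((2 / (n : ℝ)) *
          ‖ContinuousLinearMap.adjoint (J (θ s)) (y - f (θ s))‖ ^ 2) /
          (2 * Real.sqrt (‖y - f (θ s)‖ ^ 2)))) x := by
      intro x hx heq
      have hrne : y - f (θ x) ≠ 0 := hne x hx
      have hrx : (0:ℝ) < ‖y - f (θ x)‖ := norm_pos_iff.mpr hrne
      have hsq : Real.sqrt (‖y - f (θ x)‖ ^ 2) = ‖y - f (θ x)‖ :=
        Real.sqrt_sq (norm_nonneg _)
      have hdist : ‖θ x - θ 0‖ ≤ (2 / σmin) * ‖y - f (θ 0)‖ := by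
        rw [heq]
        have h1 : (0:ℝ) ≤ Real.sqrt (‖y - f (θ x)‖ ^ 2) := Real.sqrt_nonneg _
        have h2 : (0:ℝ) ≤ 2 / σmin := by positivity
        nlinarith
      have hl := hlowS x hdist (y - f (θ x)) hrne
      have hWpos : (0:ℝ) < ‖ContinuousLinearMap.adjoint (J (θ x)) (y - f (θ x))‖ :=
        lt_of_le_of_lt (by positivity) hl
      simp only
      rw [norm_smul, hsq]
      have hnorm1 : ‖(1 / (n : ℝ))‖ = 1 / (n : ℝ) := by
        rw [Real.norm_eq_abs, abs_of_pos (by positivity)]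
      rw [hnorm1]
      set W := ‖ContinuousLinearMap.adjoint (J (θ x)) (y - f (θ x))‖ with hWdef
      rw [show (2 / σmin) * (((2 / (n : ℝ)) * W ^ 2) / (2 * ‖y - f (θ x)‖))
          = (2 * W ^ 2) / (σmin * (n : ℝ) * ‖y - f (θ x)‖) by
        field_simp]
      rw [lt_div_iff₀ (by positivity)]
      have e2 : 1 / (n : ℝ) * W * (σmin * (n : ℝ) * ‖y - f (θ x)‖)
          = σmin * (‖y - f (θ x)‖ * W) := by field_simp
      rw [e2]
      nlinarith [mul_lt_mul_of_pos_left hl hWpos]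
    have main := image_le_of_liminf_slope_right_lt_deriv_boundary'
      (f := fun s => ‖θ s - θ 0‖)
      (f' := fun s => ‖(1 / (n : ℝ)) • ContinuousLinearMap.adjoint (J (θ s)) (y - f (θ s))‖)
      hfc
      (fun x hx r hr => (hfd x hx).liminf_right_slope_norm_le hr)
      hB0 hBc hBd hbound
    have hfin := main (Set.right_mem_Icc.mpr hb)
    have h1 : (0:ℝ) ≤ Real.sqrt (‖y - f (θ b)‖ ^ 2) := Real.sqrt_nonneg _
    have h2 : (0:ℝ) ≤ 2 / σmin := by positivity
    nlinarith
  -- part (i)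
  have phase1 : ∀ s : ℝ, 0 ≤ s → ‖θ s - θ 0‖ ≤ (2 / σmin) * ‖y - f (θ 0)‖ := by
    intro s hs
    by_cases hcase : ∀ u ∈ Set.Ico (0:ℝ) s, y - f (θ u) ≠ 0
    · exact key s hs hcase
    · push_neg at hcase
      obtain ⟨u0, hu0, hru0⟩ := hcase
      have hZclosed : IsClosed (Set.Icc 0 s ∩ (fun u => y - f (θ u)) ⁻¹' {0}) :=
        isClosed_Icc.inter (isClosed_singleton.preimage hrcont)
      have hZne : (Set.Icc 0 s ∩ (fun u => y - f (θ u)) ⁻¹' {0}).Nonempty :=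
        ⟨u0, ⟨hu0.1, hu0.2.le⟩, by simp [hru0]⟩
      have hZbdd : BddBelow (Set.Icc 0 s ∩ (fun u => y - f (θ u)) ⁻¹' {0}) :=
        ⟨0, fun z hz => hz.1.1⟩
      set s0 := sInf (Set.Icc 0 s ∩ (fun u => y - f (θ u)) ⁻¹' {0}) with hs0def
      have hs0Z : s0 ∈ Set.Icc 0 s ∩ (fun u => y - f (θ u)) ⁻¹' {0} :=
        hZclosed.csInf_mem hZne hZbdd
      have hs0_nonneg : 0 ≤ s0 := hs0Z.1.1
      have hs0_le : s0 ≤ s := hs0Z.1.2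
      have hr0 : y - f (θ s0) = 0 := by simpa using hs0Z.2
      have hner : ∀ u ∈ Set.Ico (0:ℝ) s0, y - f (θ u) ≠ 0 := by
        intro u hu hcontra
        have hmem : u ∈ Set.Icc 0 s ∩ (fun u => y - f (θ u)) ⁻¹' {0} :=
          ⟨⟨hu.1, hu.2.le.trans hs0_le⟩, by simp [hcontra]⟩
        exact absurd (csInf_le hZbdd hmem) (not_le.mpr hu.2)
      have h1 := key s0 hs0_nonneg hner
      have hzero : ∀ u ∈ Set.Icc s0 s, y - f (θ u) = 0 := by
        intro u hu
        have h2 : ‖y - f (θ u)‖ ^ 2 ≤ ‖y - f (θ s0)‖ ^ 2 := hganti hu.1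
        rw [hr0] at h2
        simp only [norm_zero] at h2
        have h3 : ‖y - f (θ u)‖ ^ 2 ≤ 0 := by simpa using h2
        have h4 : ‖y - f (θ u)‖ = 0 := by nlinarith [norm_nonneg (y - f (θ u))]
        exact norm_eq_zero.mp h4
      have hconst := constant_of_has_deriv_right_zero (f := θ) (a := s0) (b := s)
        hθcont.continuousOn (fun x hx => by
          have hz : (1 / (n : ℝ)) • ContinuousLinearMap.adjoint (J (θ x)) (y - f (θ x)) = 0 := by
            rw [hzero x ⟨hx.1, hx.2.le⟩]; simp
          have h := (hflow x).hasDerivWithinAt (s := Set.Ici x)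
          rwa [hz] at h)
      have := hconst s (Set.right_mem_Icc.mpr hs0_le)
      rw [this]
      exact h1
  have hlow2 : ∀ s : ℝ, 0 ≤ s →
      (σmin / 2) * ‖y - f (θ s)‖ ≤ ‖ContinuousLinearMap.adjoint (J (θ s)) (y - f (θ s))‖ :=
    fun s hs => hlow s (phase1 s hs) _
  intro t ht
  refine ⟨phase1 t ht, ?_⟩
  -- part (ii)
  set c : ℝ := σmin ^ 2 / (2 * (n : ℝ)) with hcdef
  have hφ : ∀ s : ℝ, HasDerivAt (fun u => ‖y - f (θ u)‖ ^ 2 * Real.exp (c * u))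
      ((-(2 / (n : ℝ)) * ‖ContinuousLinearMap.adjoint (J (θ s)) (y - f (θ s))‖ ^ 2)
        * Real.exp (c * s) + ‖y - f (θ s)‖ ^ 2 * (Real.exp (c * s) * c)) s := by
    intro s
    have hexp : HasDerivAt (fun u => Real.exp (c * u)) (Real.exp (c * s) * c) s := by
      simpa using ((hasDerivAt_id s).const_mul c).exp
    exact (hg' s).mul hexp
  have hmono : AntitoneOn (fun u => ‖y - f (θ u)‖ ^ 2 * Real.exp (c * u)) (Set.Icc 0 t) := by
    apply antitoneOn_of_deriv_nonpos (convex_Icc 0 t)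
    · exact (hgcont.mul (Real.continuous_exp.comp (continuous_const.mul continuous_id))).continuousOn
    · intro x _
      exact (hφ x).differentiableAt.differentiableWithinAt
    · intro x hx
      rw [interior_Icc] at hx
      rw [(hφ x).deriv]
      have hl := hlow2 x hx.1.le
      have hsqb : (σmin / 2) ^ 2 * ‖y - f (θ x)‖ ^ 2 ≤
          ‖ContinuousLinearMap.adjoint (J (θ x)) (y - f (θ x))‖ ^ 2 := by
        have hms := mul_self_le_mul_self
          (by positivity : (0:ℝ) ≤ σmin / 2 * ‖y - f (θ x)‖) hl
        nlinarith [hms]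
      have hexp : (0:ℝ) < Real.exp (c * x) := Real.exp_pos _
      have hkey : (-(2 / (n : ℝ)) * ‖ContinuousLinearMap.adjoint (J (θ x)) (y - f (θ x))‖ ^ 2)
          + ‖y - f (θ x)‖ ^ 2 * c ≤ 0 := by
        rw [hcdef]
        have e1 : -(2 / (n : ℝ)) * ‖ContinuousLinearMap.adjoint (J (θ x)) (y - f (θ x))‖ ^ 2
            + ‖y - f (θ x)‖ ^ 2 * (σmin ^ 2 / (2 * (n : ℝ)))
            = (1 / (2 * (n : ℝ))) * (σmin ^ 2 * ‖y - f (θ x)‖ ^ 2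
              - 4 * ‖ContinuousLinearMap.adjoint (J (θ x)) (y - f (θ x))‖ ^ 2) := by
          field_simp; ring
        rw [e1]
        apply mul_nonpos_of_nonneg_of_nonpos (by positivity)
        nlinarith
      nlinarith
  have hmt := hmono (Set.left_mem_Icc.mpr ht) (Set.right_mem_Icc.mpr ht) ht
  simp only [mul_zero, Real.exp_zero, mul_one] at hmt
  -- hmt : ‖y - f (θ t)‖^2 * exp (c*t) ≤ ‖y - f (θ 0)‖^2
  have hE : (0:ℝ) < Real.exp (c * t) := Real.exp_pos _
  have hfinal : ‖y - f (θ t)‖ ^ 2 ≤ ‖y - f (θ 0)‖ ^ 2 * Real.exp (-(c * t)) := by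
    rw [Real.exp_neg, mul_comm (‖y - f (θ 0)‖ ^ 2), ← div_eq_inv_mul, le_div_iff₀ hE]
    linarith
  have hrw : -(σmin ^ 2 / (2 * (n : ℝ))) * t = -(c * t) := by rw [hcdef]; ring
  rw [hrw]
  have h2n : (0:ℝ) ≤ 1 / (2 * (n : ℝ)) := by positivity
  calc (1 / (2 * (n : ℝ))) * ‖y - f (θ t)‖ ^ 2
      ≤ (1 / (2 * (n : ℝ))) * (‖y - f (θ 0)‖ ^ 2 * Real.exp (-(c * t))) :=
        mul_le_mul_of_nonneg_left hfinal h2n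
    _ = (1 / (2 * (n : ℝ))) * ‖y - f (θ 0)‖ ^ 2 * Real.exp (-(c * t)) := by ring
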